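/- For every seed S of type (4,1), the second iterate of the seed map is projectively equivalent to the identity: there exists a projective transformation g of ℝP² carrying each point of S (embedded in ℝP² via ℝ²) to the corresponding point of T_{4,1}²(S), i.e. g(A_i) equals the i-th A-point of T_{4,1}²(S) for i = 1,…,4 and g(B_4) equals the B-point of T_{4,1}²(S). (T_{4,1}² is the identity on the space C(4,1) of projective classes of seeds of type (4,1).) -/

import Mathlib

/-- Planar determinant (cross product) of two vectors of `ℝ²`. -/
def det2 (u v : ℝ × ℝ) : ℝ := u.1 * v.2 - u.2 * v.1

/-- Counterclockwise orientation of an ordered triple of points of `ℝ²`. -/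
def ccw (a b c : ℝ × ℝ) : Prop := 0 < det2 (b - a) (c - a)

/-- The (1-indexed) points `A 1, …, A n` are in strictly convex position in this
(counterclockwise) cyclic order: every triple taken in cyclic order is
counterclockwise. -/
def ConvexCyc (n : ℕ) (A : ℕ → ℝ × ℝ) : Prop :=
  ∀ i j l : ℕ, 1 ≤ i → i < j → j < l → l ≤ n → ccw (A i) (A j) (A l)

/-- A seed of type `(n,k)`: the points `A 1, …, A n` are in strictly convex position
in counterclockwise cyclic order, and for `j = n-k+1, …, n` the point `B j` lies in
the open segment between `A j` and `A (j+1)` (indices mod `n`, so `A (n+1) = A 1`;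
note `j % n + 1` equals `j + 1` for `j < n` and equals `1` for `j = n`).
Only the values `A 1, …, A n` and `B (n-k+1), …, B n` are relevant. -/
def IsSeed (n k : ℕ) (A B : ℕ → ℝ × ℝ) : Prop :=
  ConvexCyc n A ∧
    ∀ j : ℕ, n - k + 1 ≤ j → j ≤ n →
      ∃ t ∈ Set.Ioo (0 : ℝ) 1, B j = A j + t • (A (j % n + 1) - A j)

/-- The point `p` lies on the line through `a` and `b`. -/
def onLine (a b p : ℝ × ℝ) : Prop := det2 (b - a) (p - a) = 0

/-- The intersection point of the line through `a`, `b` with the line through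
`c`, `d` (when the two lines are non-parallel). -/
noncomputable def lineInter (a b c d : ℝ × ℝ) : ℝ × ℝ :=
  a + (det2 (c - a) (d - c) / det2 (b - a) (d - c)) • (b - a)

/-- Auxiliary descending recursion producing the points `B*`: `BstAux n A Astar d`
is the point `B*_(n-d)`.  For `d = 0`, `B*_n` is the intersection of the line
through `A 1` and `A*_2` with the line through `A*_n` and `A*_1`; descending,
`B*_j` (`j = n - d - 1`) is the intersection of the line through `A (j+1)` and
`B*_(j+1)` with the line through `A*_j` and `A*_(j+1)`. -/
noncomputable def BstAux (n : ℕ) (A Astar : ℕ → ℝ × ℝ) : ℕ → ℝ × ℝ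
  | 0 => lineInter (A 1) (Astar 2) (Astar n) (Astar 1)
  | d + 1 => lineInter (A (n - d)) (BstAux n A Astar d) (Astar (n - d - 1)) (Astar (n - d))

/-- The seed map `T_{n,k}`, sending the configuration `(A, B)` to `(A*, B*)`:
`A*_i = A_(i+1)` for `i = 1, …, n-k`; `A*_i = B_i` for `i = n-k+1, …, n`; and the
points `B*_j`, `j = n, n-1, …, n-k+1`, are produced by the descending intersection
recursion `BstAux`. -/
noncomputable def seedMap (n k : ℕ) (S : (ℕ → ℝ × ℝ) × (ℕ → ℝ × ℝ)) :
    (ℕ → ℝ × ℝ) × (ℕ → ℝ × ℝ) :=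
  let Astar : ℕ → ℝ × ℝ := fun i => if i ≤ n - k then S.1 (i + 1) else S.2 i
  (Astar, fun j => BstAux n S.1 Astar (n - j))

/-- The real projective plane, as the projectivization of `ℝ³`. -/
abbrev P2 := Projectivization ℝ (Fin 3 → ℝ)

/-- The standard embedding `ℝ² → ℝP²`, `(x,y) ↦ [x:y:1]`. -/
noncomputable def emb (p : ℝ × ℝ) : P2 :=
  Projectivization.mk ℝ ![p.1, p.2, 1] (by
    intro h
    have h2 := congrFun h 2
    simp at h2)

/-- The projective transformation of `ℝP²` induced by an invertible linear map of `ℝ³`. -/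
noncomputable def pmap (g : (Fin 3 → ℝ) ≃ₗ[ℝ] (Fin 3 → ℝ)) : P2 → P2 :=
  Projectivization.map g.toLinearMap g.injective


/-! ### Auxiliary machinery for the proof -/

/-- Twice the signed area of the triangle `p q r`. -/
def tri (p q r : ℝ × ℝ) : ℝ := det2 (q - p) (r - p)

/-- The normalizing matrix carrying the standard projective frame to the
four points `a b c d`. -/
noncomputable def Nmat (a b c d : ℝ × ℝ) : Matrix (Fin 3) (Fin 3) ℝ :=
  Matrix.of
    ![![tri a c d * b.1 - tri b c d * a.1, tri a b c * d.1 - tri b c d * a.1, tri b c d * a.1],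
      ![tri a c d * b.2 - tri b c d * a.2, tri a b c * d.2 - tri b c d * a.2, tri b c d * a.2],
      ![tri a c d - tri b c d, tri a b c - tri b c d, tri b c d]]

/-- The matrix of `T_{4,1}^2` in normalized coordinates (scaled to be polynomial). -/
def Mp (V W : ℝ) : Matrix (Fin 3) (Fin 3) ℝ :=
  Matrix.of ![![V*(V-W), 0, V*(W-V)], ![V*V, 0, V*(W-V)], ![V*V, (W-V)*W, V*(W-V)]]

lemma hom_ne (p : ℝ × ℝ) : (![p.1, p.2, 1] : Fin 3 → ℝ) ≠ 0 := by
  intro h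
  have h2 := congrFun h 2
  simp at h2

lemma key (e : (Fin 3 → ℝ) ≃ₗ[ℝ] (Fin 3 → ℝ)) (p q : ℝ × ℝ) (s : ℝ)
    (h : e ![p.1, p.2, 1] = s • ![q.1, q.2, 1]) : pmap e (emb p) = emb q := by
  unfold pmap emb
  rw [Projectivization.map_mk]
  refine (Projectivization.mk_eq_mk_iff' ℝ _ _
    (by simpa using (map_zero e ▸ e.injective.ne (hom_ne p))) (hom_ne q)).2 ⟨s, ?_⟩
  simpa using h.symm

lemma chain (nE mE : (Fin 3 → ℝ) ≃ₗ[ℝ] (Fin 3 → ℝ)) (x0 y0 hp hq : Fin 3 → ℝ)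
    (s0 s1 s2 : ℝ) (hs0 : s0 ≠ 0)
    (h0 : nE x0 = s0 • hp) (h1 : mE x0 = s1 • y0) (h2 : nE y0 = s2 • hq) :
    ((nE.symm.trans mE).trans nE) hp = (s0⁻¹ * s1 * s2) • hq := by
  have hsymm : nE.symm hp = s0⁻¹ • x0 := by
    rw [LinearEquiv.symm_apply_eq, map_smul, h0, smul_smul, inv_mul_cancel₀ hs0, one_smul]
  simp [hsymm, map_smul, h1, h2, smul_smul]

lemma detN (a b c d : ℝ × ℝ) :
    (Nmat a b c d).det = tri b c d * (tri a c d * (tri a b d * tri a b c)) := by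
  simp [Nmat, Matrix.det_fin_three, tri, det2]
  ring

lemma detMp (V W : ℝ) : (Mp V W).det = (V*(W-V)*W)^2 := by
  simp [Mp, Matrix.det_fin_three]
  ring

lemma N1 (a b c d : ℝ × ℝ) :
    (Nmat a b c d).mulVec ![0, 0, 1] = tri b c d • ![a.1, a.2, 1] := by
  funext i
  fin_cases i <;>
    simp [Nmat, Matrix.mulVec, dotProduct, Fin.sum_univ_three, tri, det2]

lemma N2 (a b c d : ℝ × ℝ) :
    (Nmat a b c d).mulVec ![1, 0, 1] = tri a c d • ![b.1, b.2, 1] := by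
  funext i
  fin_cases i <;>
    simp [Nmat, Matrix.mulVec, dotProduct, Fin.sum_univ_three, tri, det2] <;> ring

lemma N3 (a b c d : ℝ × ℝ) :
    (Nmat a b c d).mulVec ![1, 1, 1] = tri a b d • ![c.1, c.2, 1] := by
  funext i
  fin_cases i <;>
    simp [Nmat, Matrix.mulVec, dotProduct, Fin.sum_univ_three, tri, det2] <;> ring

lemma N4 (a b c d : ℝ × ℝ) :
    (Nmat a b c d).mulVec ![0, 1, 1] = tri a b c • ![d.1, d.2, 1] := by
  funext i
  fin_cases i <;>
    simp [Nmat, Matrix.mulVec, dotProduct, Fin.sum_univ_three, tri, det2] <;> ring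

lemma N5 (a b c d : ℝ × ℝ) (t : ℝ) :
    (Nmat a b c d).mulVec ![0, (1-t) * tri b c d, (1-t) * tri b c d + t * tri a b c]
      = (tri b c d * tri a b c)
        • ![(d + t • (a - d)).1, (d + t • (a - d)).2, 1] := by
  funext i
  fin_cases i <;>
    simp [Nmat, Matrix.mulVec, dotProduct, Fin.sum_univ_three, tri, det2] <;> ring

lemma N6 (a b c d : ℝ × ℝ) (t : ℝ) (hden : tri a b c + (1-t) * tri a c d ≠ 0) :
    (Nmat a b c d).mulVec
        ![(1-t) * tri b c d, (1-t) * tri b c d,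
          ((1-t) * tri b c d + t * tri a b c) + (1-t) * tri b c d]
      = (((1-t) * tri b c d + t * tri a b c) * tri b c d + ((1-t) * tri b c d) * tri a b d)
        • ![(a + ((1-t) * tri a b d / (tri a b c + (1-t) * tri a c d)) • (c - a)).1,
            (a + ((1-t) * tri a b d / (tri a b c + (1-t) * tri a c d)) • (c - a)).2, 1] := by
  funext i
  fin_cases i <;>
  · simp only [Nmat, Matrix.mulVec, dotProduct, Fin.sum_univ_three, Matrix.of_apply,
      Matrix.cons_val', Matrix.cons_val_zero, Matrix.cons_val_one, Matrix.head_cons,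
      Matrix.cons_val_fin_one, Matrix.empty_val', Fin.mk_zero, Fin.mk_one, Fin.isValue,
      Matrix.cons_val_two, Matrix.tail_cons, Pi.smul_apply, smul_eq_mul, Fin.reduceFinMk, Matrix.cons_val,
      Matrix.vecHead,
      Prod.fst_add, Prod.snd_add, Prod.fst_sub, Prod.snd_sub, Prod.smul_fst, Prod.smul_snd]
    have hden' : tri a b c + tri a c d * (1 - t) ≠ 0 := by rwa [mul_comm (tri a c d)]
    field_simp
    simp only [tri, det2, Prod.fst_sub, Prod.snd_sub]
    ring

lemma N7 (a b c d : ℝ × ℝ) (hden : tri a c d + tri a b c ≠ 0) :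
    (Nmat a b c d).mulVec ![1, 1, 2]
      = (tri a c d + tri a b c)
        • ![(b + (tri a b c / (tri a c d + tri a b c)) • (d - b)).1,
            (b + (tri a b c / (tri a c d + tri a b c)) • (d - b)).2, 1] := by
  funext i
  fin_cases i <;>
  · simp only [Nmat, Matrix.mulVec, dotProduct, Fin.sum_univ_three, Matrix.of_apply,
      Matrix.cons_val', Matrix.cons_val_zero, Matrix.cons_val_one, Matrix.head_cons,
      Matrix.cons_val_fin_one, Matrix.empty_val', Fin.mk_zero, Fin.mk_one, Fin.isValue,
      Matrix.cons_val_two, Matrix.tail_cons, Pi.smul_apply, smul_eq_mul, Fin.reduceFinMk, Matrix.cons_val,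
      Matrix.vecHead,
      Prod.fst_add, Prod.snd_add, Prod.fst_sub, Prod.snd_sub, Prod.smul_fst, Prod.smul_snd]
    field_simp
    simp only [tri, det2, Prod.fst_sub, Prod.snd_sub]
    ring

lemma Mp1 (V W : ℝ) : (Mp V W).mulVec ![0,0,1] = (V*(W-V)) • ![1,1,1] := by
  funext i
  fin_cases i <;> simp [Mp, Matrix.mulVec, dotProduct, Fin.sum_univ_three] <;> ring

lemma Mp2 (V W : ℝ) : (Mp V W).mulVec ![1,0,1] = (V*W) • ![0,1,1] := by
  funext i
  fin_cases i <;> simp [Mp, Matrix.mulVec, dotProduct, Fin.sum_univ_three] <;> ring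

lemma Mp3 (V W : ℝ) : (Mp V W).mulVec ![1,1,1] = W • ![0,V,W] := by
  funext i
  fin_cases i <;> simp [Mp, Matrix.mulVec, dotProduct, Fin.sum_univ_three] <;> ring

lemma Mp4 (V W : ℝ) : (Mp V W).mulVec ![0,1,1] = (W-V) • ![V,V,W+V] := by
  funext i
  fin_cases i <;> simp [Mp, Matrix.mulVec, dotProduct, Fin.sum_univ_three] <;> ring

lemma Mp5 (V W : ℝ) : (Mp V W).mulVec ![0,V,W] = (V*W*(W-V)) • ![1,1,2] := by
  funext i
  fin_cases i <;> simp [Mp, Matrix.mulVec, dotProduct, Fin.sum_univ_three] <;> ring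

lemma cl1 (a b c d : ℝ × ℝ) (t : ℝ) :
    lineInter a c (d + t • (a - d)) b
      = a + ((1-t) * tri a b d / (tri a b c + (1-t) * tri a c d)) • (c - a) := by
  have hnum : det2 ((d + t • (a - d)) - a) (b - (d + t • (a - d))) = -((1-t) * tri a b d) := by
    simp [tri, det2]; ring
  have hden2 : det2 (c - a) (b - (d + t • (a - d))) = -(tri a b c + (1-t) * tri a c d) := by
    simp [tri, det2]; ring
  rw [lineInter, hnum, hden2, neg_div_neg_eq]

lemma cl2 (a b c d : ℝ × ℝ) (r : ℝ) (hr : r ≠ 1) :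
    lineInter b d (a + r • (c - a)) c
      = b + (tri a b c / (tri a c d + tri a b c)) • (d - b) := by
  have hnum : det2 ((a + r • (c - a)) - b) (c - (a + r • (c - a)))
      = -((1-r) * tri a b c) := by
    simp [tri, det2]; ring
  have hden2 : det2 (d - b) (c - (a + r • (c - a)))
      = -((1-r) * (tri a c d + tri a b c)) := by
    simp [tri, det2]; ring
  rw [lineInter, hnum, hden2, neg_div_neg_eq]
  congr 2
  rw [mul_div_mul_left]
  intro h
  exact hr (by linarith)

/-- **`T_{4,1}^2` is the identity on the space `C(4,1)` of projective classes of
seeds of type `(4,1)`.**  For every seed `S = (A,B)` of type `(4,1)`, there is a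
projective transformation `g` of `ℝP²` carrying each point of `S` (embedded in
`ℝP²`) to the corresponding point of `T_{4,1}^2(S)`. -/
theorem seedMap_4_1_pow_2_projectively_identity (A B : ℕ → ℝ × ℝ)
    (hS : IsSeed 4 1 A B) :
    ∃ g : (Fin 3 → ℝ) ≃ₗ[ℝ] (Fin 3 → ℝ),
      (∀ i : ℕ, 1 ≤ i → i ≤ 4 →
        pmap g (emb (A i)) = emb (((seedMap 4 1)^[2] (A, B)).1 i)) ∧
      (∀ j : ℕ, 4 - 1 + 1 ≤ j → j ≤ 4 →
        pmap g (emb (B j)) = emb (((seedMap 4 1)^[2] (A, B)).2 j)) := by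
  obtain ⟨hconv, hBcond⟩ := hS
  obtain ⟨t, ht, hBeq⟩ := hBcond 4 (by norm_num) (le_refl 4)
  norm_num at hBeq
  -- positivity of the four triangle areas
  have hm0 : 0 < tri (A 2) (A 3) (A 4) :=
    hconv 2 3 4 (by norm_num) (by norm_num) (by norm_num) (by norm_num)
  have hm1 : 0 < tri (A 1) (A 3) (A 4) :=
    hconv 1 3 4 (by norm_num) (by norm_num) (by norm_num) (by norm_num)
  have hm2 : 0 < tri (A 1) (A 2) (A 4) :=
    hconv 1 2 4 (by norm_num) (by norm_num) (by norm_num) (by norm_num)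
  have hm3 : 0 < tri (A 1) (A 2) (A 3) :=
    hconv 1 2 3 (by norm_num) (by norm_num) (by norm_num) (by norm_num)
  have ht0 : (0:ℝ) < t := ht.1
  have ht1 : t < 1 := ht.2
  have hV : 0 < (1-t) * tri (A 2) (A 3) (A 4) := mul_pos (by linarith) hm0
  have htm3 : 0 < t * tri (A 1) (A 2) (A 3) := mul_pos ht0 hm3
  have hW : 0 < (1-t) * tri (A 2) (A 3) (A 4) + t * tri (A 1) (A 2) (A 3) := by linarith
  have hden1 : 0 < tri (A 1) (A 2) (A 3) + (1-t) * tri (A 1) (A 3) (A 4) := by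
    have := mul_pos (show (0:ℝ) < 1 - t by linarith) hm1
    linarith
  have hsum : 0 < tri (A 1) (A 3) (A 4) + tri (A 1) (A 2) (A 3) := by linarith
  -- construct the two linear equivalences
  have hdetN : (Nmat (A 1) (A 2) (A 3) (A 4)).det ≠ 0 := by
    rw [detN]
    exact ne_of_gt (mul_pos hm0 (mul_pos hm1 (mul_pos hm2 hm3)))
  have hdetM : (Mp ((1-t) * tri (A 2) (A 3) (A 4))
      ((1-t) * tri (A 2) (A 3) (A 4) + t * tri (A 1) (A 2) (A 3))).det ≠ 0 := by
    rw [detMp]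
    apply pow_ne_zero
    apply mul_ne_zero (mul_ne_zero (ne_of_gt hV) _) (ne_of_gt hW)
    have : (1-t) * tri (A 2) (A 3) (A 4) + t * tri (A 1) (A 2) (A 3)
        - (1-t) * tri (A 2) (A 3) (A 4) = t * tri (A 1) (A 2) (A 3) := by ring
    rw [this]
    exact ne_of_gt htm3
  set NM := Nmat (A 1) (A 2) (A 3) (A 4) with hNM
  set MM := Mp ((1-t) * tri (A 2) (A 3) (A 4))
      ((1-t) * tri (A 2) (A 3) (A 4) + t * tri (A 1) (A 2) (A 3)) with hMM
  have nInv : Invertible NM := NM.invertibleOfIsUnitDet (isUnit_iff_ne_zero.2 hdetN)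
  have mInv : Invertible MM := MM.invertibleOfIsUnitDet (isUnit_iff_ne_zero.2 hdetM)
  set nE := NM.toLinearEquiv' nInv with hnE
  set mE := MM.toLinearEquiv' mInv with hmE
  have nApp : ∀ x, nE x = NM.mulVec x := fun _ => rfl
  have mApp : ∀ x, mE x = MM.mulVec x := fun _ => rfl
  refine ⟨(nE.symm.trans mE).trans nE, ?_, ?_⟩
  · intro i hi1 hi4
    interval_cases i
    · -- A 1 ↦ A 3
      rw [show ((seedMap 4 1)^[2] (A, B)).1 1 = A 3 by simp [seedMap, BstAux]]
      exact key _ (A 1) (A 3) _ (chain nE mE _ _ _ _ _ _ _ (ne_of_gt hm0)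
        ((nApp _).trans (N1 (A 1) (A 2) (A 3) (A 4)))
        ((mApp _).trans (Mp1 _ _))
        ((nApp _).trans (N3 (A 1) (A 2) (A 3) (A 4))))
    · -- A 2 ↦ A 4
      rw [show ((seedMap 4 1)^[2] (A, B)).1 2 = A 4 by simp [seedMap, BstAux]]
      exact key _ (A 2) (A 4) _ (chain nE mE _ _ _ _ _ _ _ (ne_of_gt hm1)
        ((nApp _).trans (N2 (A 1) (A 2) (A 3) (A 4)))
        ((mApp _).trans (Mp2 _ _))
        ((nApp _).trans (N4 (A 1) (A 2) (A 3) (A 4))))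
    · -- A 3 ↦ B 4
      rw [show ((seedMap 4 1)^[2] (A, B)).1 3 = B 4 by simp [seedMap, BstAux], hBeq]
      exact key _ (A 3) (A 4 + t • (A 1 - A 4)) _
        (chain nE mE _ _ _ _ _ _ _ (ne_of_gt hm2)
          ((nApp _).trans (N3 (A 1) (A 2) (A 3) (A 4)))
          ((mApp _).trans (Mp3 _ _))
          ((nApp _).trans (N5 (A 1) (A 2) (A 3) (A 4) t)))
    · -- A 4 ↦ B*4 of the first iterate
      rw [show ((seedMap 4 1)^[2] (A, B)).1 4 = lineInter (A 1) (A 3) (B 4) (A 2) by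
        simp [seedMap, BstAux], hBeq, cl1 (A 1) (A 2) (A 3) (A 4) t]
      exact key _ (A 4) _ _
        (chain nE mE _ _ _ _ _ _ _ (ne_of_gt hm3)
          ((nApp _).trans (N4 (A 1) (A 2) (A 3) (A 4)))
          ((mApp _).trans (Mp4 _ _))
          ((nApp _).trans (N6 (A 1) (A 2) (A 3) (A 4) t (ne_of_gt hden1))))
  · intro j hj1 hj4
    have hj : j = 4 := le_antisymm hj4 (by omega)
    subst hj
    have hr1 : (1-t) * tri (A 1) (A 2) (A 4)
        / (tri (A 1) (A 2) (A 3) + (1-t) * tri (A 1) (A 3) (A 4)) ≠ 1 := by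
      intro h
      have h2 : (1-t) * tri (A 1) (A 2) (A 4)
          = tri (A 1) (A 2) (A 3) + (1-t) * tri (A 1) (A 3) (A 4) := by
        field_simp [ne_of_gt hden1] at h
        linarith
      have hid : tri (A 1) (A 3) (A 4) - tri (A 1) (A 2) (A 4) + tri (A 1) (A 2) (A 3)
          = tri (A 2) (A 3) (A 4) := by simp [tri, det2]; ring
      have h3 : (1-t) * (tri (A 1) (A 3) (A 4) - tri (A 1) (A 2) (A 4) + tri (A 1) (A 2) (A 3))
          = (1-t) * tri (A 2) (A 3) (A 4) := by rw [hid]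
      nlinarith [h3, h2, hW]
    rw [show ((seedMap 4 1)^[2] (A, B)).2 4
        = lineInter (A 2) (A 4) (lineInter (A 1) (A 3) (B 4) (A 2)) (A 3) by
        simp [seedMap, BstAux], hBeq, cl1 (A 1) (A 2) (A 3) (A 4) t,
      cl2 (A 1) (A 2) (A 3) (A 4) _ hr1]
    exact key _ (A 4 + t • (A 1 - A 4)) _ _
      (chain nE mE _ _ _ _ _ _ _ (ne_of_gt (mul_pos hm0 hm3))
        ((nApp _).trans (N5 (A 1) (A 2) (A 3) (A 4) t))
        ((mApp _).trans (Mp5 _ _))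
        ((nApp _).trans (N7 (A 1) (A 2) (A 3) (A 4) (ne_of_gt hsum))))
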